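/- Let A ∈ ℝ^{d×d}, B ∈ ℝ^{d×m}, 0 < γ < 1, let Q ∈ ℝ^{d×d} be symmetric positive semidefinite and R ∈ ℝ^{m×m} symmetric positive definite. Suppose 𝒫 ∈ ℝ^{d×d} is symmetric positive definite and satisfies the discounted algebraic Riccati equation 𝒫 = Q + γAᵀ𝒫A − γ²LᵀΨ⁻¹L, where L = Bᵀ𝒫A, Ψ = R + γBᵀ𝒫B, and H = γΨ⁻¹L. If moreover (1 − γ)𝒫 ≺ Q + HᵀRH (i.e., Q + HᵀRH − (1 − γ)𝒫 is positive definite), then every eigenvalue of the closed-loop matrix A − BH has modulus strictly less than 1; in particular (A − BH)ᵏ → 0 as k → ∞. -/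

import Mathlib

open Matrix Filter

section RiccatiAux

lemma riccati_dot_map_eq {n : ℕ} (M : Matrix (Fin n) (Fin n) ℝ) (hM : Mᵀ = M) (v : Fin n → ℂ) :
    star v ⬝ᵥ (M.map (algebraMap ℝ ℂ)) *ᵥ v =
      (((fun i => (v i).re) ⬝ᵥ M *ᵥ (fun i => (v i).re) +
        (fun i => (v i).im) ⬝ᵥ M *ᵥ (fun i => (v i).im) : ℝ) : ℂ) := by
  have hsym : ∀ i j, M i j = M j i := fun i j => (congrFun (congrFun hM.symm i) j : _)
  have lhs : star v ⬝ᵥ (M.map (algebraMap ℝ ℂ)) *ᵥ v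
      = ∑ i, ∑ j, (starRingEnd ℂ) (v i) * ((M i j : ℝ) : ℂ) * v j := by
    simp [dotProduct, mulVec, Finset.mul_sum, Matrix.map_apply, mul_assoc, RCLike.star_def,
      Complex.coe_algebraMap]
  rw [lhs]
  apply Complex.ext
  · simp only [Complex.re_sum, Complex.ofReal_re, dotProduct, mulVec,
      Finset.sum_add_distrib.symm]
    refine Finset.sum_congr rfl fun i _ => ?_
    rw [Finset.mul_sum, Finset.mul_sum, ← Finset.sum_add_distrib]
    refine Finset.sum_congr rfl fun j _ => ?_
    simp only [Complex.mul_re, Complex.mul_im, Complex.conj_re, Complex.conj_im,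
      Complex.ofReal_re, Complex.ofReal_im]
    ring
  · simp only [Complex.im_sum, Complex.ofReal_im]
    have key : ∀ i j, ((starRingEnd ℂ) (v i) * ((M i j : ℝ) : ℂ) * v j).im
        = M i j * ((v i).re * (v j).im - (v i).im * (v j).re) := by
      intro i j
      simp only [Complex.mul_im, Complex.mul_re, Complex.conj_re, Complex.conj_im,
        Complex.ofReal_re, Complex.ofReal_im]
      ring
    simp only [key]
    have h2 : (∑ i, ∑ j, M i j * ((v i).re * (v j).im - (v i).im * (v j).re))
        = -(∑ i, ∑ j, M i j * ((v i).re * (v j).im - (v i).im * (v j).re)) := by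
      conv_lhs => rw [Finset.sum_comm]
      rw [← Finset.sum_neg_distrib]
      refine Finset.sum_congr rfl fun i _ => ?_
      rw [← Finset.sum_neg_distrib]
      refine Finset.sum_congr rfl fun j _ => ?_
      rw [hsym j i]
      ring
    linarith

lemma riccati_quad_pos {n : ℕ} {M : Matrix (Fin n) (Fin n) ℝ} (hM : M.PosDef)
    (v : Fin n → ℂ) (hv : v ≠ 0) :
    0 < (fun i => (v i).re) ⬝ᵥ M *ᵥ (fun i => (v i).re) +
        (fun i => (v i).im) ⬝ᵥ M *ᵥ (fun i => (v i).im) := by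
  have hre : ∀ x : Fin n → ℝ, 0 ≤ x ⬝ᵥ M *ᵥ x := by
    intro x
    simpa using hM.posSemidef.dotProduct_mulVec_nonneg x
  have hpos : ∀ x : Fin n → ℝ, x ≠ 0 → 0 < x ⬝ᵥ M *ᵥ x := by
    intro x hx
    simpa using hM.dotProduct_mulVec_pos hx
  by_cases h1 : (fun i => (v i).re) = 0
  · have h2 : (fun i => (v i).im) ≠ 0 := by
      intro h2
      apply hv
      funext i
      have := congrFun h1 i
      have := congrFun h2 i
      exact Complex.ext (by simpa using congrFun h1 i) (by simpa using congrFun h2 i)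
    have := hpos _ h2
    have := hre (fun i => (v i).re)
    linarith
  · have := hpos _ h1
    have := hre (fun i => (v i).im)
    linarith


lemma riccati_lyap {d m : ℕ} (A : Matrix (Fin d) (Fin d) ℝ) (B : Matrix (Fin d) (Fin m) ℝ)
    (γ : ℝ) (hγ0 : 0 < γ)
    (Q P : Matrix (Fin d) (Fin d) ℝ) (R : Matrix (Fin m) (Fin m) ℝ)
    (hR : R.PosDef) (hP : P.PosDef)
    (L : Matrix (Fin m) (Fin d) ℝ) (hL : L = Bᵀ * P * A)
    (Ψ : Matrix (Fin m) (Fin m) ℝ) (hΨ : Ψ = R + γ • (Bᵀ * P * B))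
    (H : Matrix (Fin m) (Fin d) ℝ) (hH : H = γ • (Ψ⁻¹ * L))
    (hric : P = Q + γ • (Aᵀ * P * A) - (γ ^ 2) • (Lᵀ * Ψ⁻¹ * L)) :
    P = γ • ((A - B * H)ᵀ * P * (A - B * H)) + (Q + Hᵀ * R * H) := by
  have hPs : Pᵀ = P := hP.isHermitian
  have hBPB : (Bᵀ * P * B).PosSemidef := by
    simpa [Matrix.conjTranspose_eq_transpose_of_trivial] using hP.posSemidef.mul_mul_conjTranspose_same Bᵀ
  have hΨpd : Ψ.PosDef := by
    refine Matrix.PosDef.of_dotProduct_mulVec_pos ?_ ?_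
    · rw [hΨ]
      have hsm : (γ • (Bᵀ * P * B)).IsHermitian := by
        rw [Matrix.IsHermitian, Matrix.conjTranspose_smul, hBPB.1, star_trivial]
      exact hR.isHermitian.add hsm
    · intro x hx
      have h1 := hR.dotProduct_mulVec_pos hx
      have h2 := hBPB.dotProduct_mulVec_nonneg x
      rw [hΨ, Matrix.add_mulVec, dotProduct_add, Matrix.smul_mulVec, dotProduct_smul]
      have : (0:ℝ) ≤ γ • (star x ⬝ᵥ (Bᵀ * P * B) *ᵥ x) := smul_nonneg hγ0.le h2
      exact add_pos_of_pos_of_nonneg h1 this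
  have hΨs : Ψᵀ = Ψ := hΨpd.isHermitian
  have hΨu : IsUnit Ψ.det := isUnit_iff_ne_zero.mpr hΨpd.det_pos.ne'
  have hinvs : (Ψ⁻¹)ᵀ = Ψ⁻¹ := by rw [Matrix.transpose_nonsing_inv, hΨs]
  have hinvmul : Ψ⁻¹ * Ψ = 1 := Matrix.nonsing_inv_mul Ψ hΨu
  have hHt : Hᵀ = γ • (Lᵀ * Ψ⁻¹) := by
    rw [hH, Matrix.transpose_smul, Matrix.transpose_mul, hinvs]
  have e1 : Hᵀ * Ψ * H = (γ ^ 2) • (Lᵀ * Ψ⁻¹ * L) := by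
    rw [hHt, hH]
    rw [Matrix.smul_mul, Matrix.smul_mul, Matrix.mul_smul, smul_smul, ← pow_two]
    congr 1
    have h3 : Ψ⁻¹ * Ψ * (Ψ⁻¹ * L) = Ψ⁻¹ * L := by rw [hinvmul]; simp
    calc Lᵀ * Ψ⁻¹ * Ψ * (Ψ⁻¹ * L) = Lᵀ * (Ψ⁻¹ * Ψ * (Ψ⁻¹ * L)) := by
          simp only [Matrix.mul_assoc]
    _ = Lᵀ * (Ψ⁻¹ * L) := by rw [h3]
    _ = Lᵀ * Ψ⁻¹ * L := by rw [Matrix.mul_assoc]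
  have e2 : Lᵀ * H = γ • (Lᵀ * Ψ⁻¹ * L) := by
    rw [hH, Matrix.mul_smul, Matrix.mul_assoc]
  have e3 : Hᵀ * L = γ • (Lᵀ * Ψ⁻¹ * L) := by
    rw [hHt, Matrix.smul_mul]
  have e4 : Aᵀ * P * B = Lᵀ := by
    rw [hL, Matrix.transpose_mul, Matrix.transpose_mul, Matrix.transpose_transpose, hPs,
      Matrix.mul_assoc]
  have expand : (A - B * H)ᵀ * P * (A - B * H)
      = Aᵀ * P * A - (Aᵀ * P * B) * H - Hᵀ * (Bᵀ * P * A) + Hᵀ * (Bᵀ * P * B) * H := by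
    rw [Matrix.transpose_sub, Matrix.transpose_mul]
    simp only [Matrix.sub_mul, Matrix.mul_sub, Matrix.mul_assoc]
    abel
  have hY : γ • (Hᵀ * (Bᵀ * P * B) * H) = Hᵀ * Ψ * H - Hᵀ * R * H := by
    have : γ • (Hᵀ * (Bᵀ * P * B) * H) = Hᵀ * (γ • (Bᵀ * P * B)) * H := by
      rw [Matrix.mul_smul, Matrix.smul_mul]
    rw [this, show γ • (Bᵀ * P * B) = Ψ - R by rw [hΨ]; abel, Matrix.mul_sub, Matrix.sub_mul]
  have step : γ • ((A - B * H)ᵀ * P * (A - B * H))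
      = γ • (Aᵀ * P * A) - γ • (Lᵀ * H) - γ • (Hᵀ * L) + (Hᵀ * Ψ * H - Hᵀ * R * H) := by
    rw [expand, e4, hL.symm, smul_add, smul_sub, smul_sub, hY]
  rw [step, e1, e2, e3, smul_smul, ← pow_two]
  conv_lhs => rw [hric]
  abel

lemma riccati_eig {d : ℕ} (M P S : Matrix (Fin d) (Fin d) ℝ) (γ : ℝ)
    (hγ0 : 0 < γ) (hγ1 : γ < 1)
    (hP : P.PosDef) (hPs : Pᵀ = P) (hSs : Sᵀ = S)
    (hlyap : P = γ • (Mᵀ * P * M) + S)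
    (hgap : (S - (1 - γ) • P).PosDef) :
    ∀ lam ∈ spectrum ℂ (M.map (algebraMap ℝ ℂ)), ‖lam‖ < 1 := by
  intro lam hlam
  set φ : Matrix (Fin d) (Fin d) ℝ →+* Matrix (Fin d) (Fin d) ℂ := (algebraMap ℝ ℂ).mapMatrix with hφ
  have hφ_apply : ∀ (X : Matrix (Fin d) (Fin d) ℝ), φ X = X.map (algebraMap ℝ ℂ) := by
    intro X; rfl
  have hφ_smul : ∀ (c : ℝ) (X : Matrix (Fin d) (Fin d) ℝ), φ (c • X) = (c : ℂ) • φ X := by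
    intro c X
    ext i j
    simp [hφ_apply, Matrix.map_apply, Complex.ofReal_mul]
  have hφ_t : ∀ (X : Matrix (Fin d) (Fin d) ℝ), φ (Xᵀ) = (φ X)ᵀ := by
    intro X; ext i j; simp [hφ_apply, Matrix.map_apply]
  -- eigenvector
  have heig : Module.End.HasEigenvalue (Matrix.toLin' (M.map (algebraMap ℝ ℂ))) lam := by
    rw [Module.End.hasEigenvalue_iff_mem_spectrum]
    have := AlgEquiv.spectrum_eq (Matrix.toLinAlgEquiv' (R := ℂ) (n := Fin d))
      (M.map (algebraMap ℝ ℂ))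
    rw [show (Matrix.toLinAlgEquiv' (M.map (algebraMap ℝ ℂ)))
        = Matrix.toLin' (M.map (algebraMap ℝ ℂ)) from rfl] at this
    rw [this]
    exact hlam
  obtain ⟨v, hv⟩ := heig.exists_hasEigenvector
  have hvec : (M.map (algebraMap ℝ ℂ)) *ᵥ v = lam • v := by
    have := hv.apply_eq_smul
    rwa [Matrix.toLin'_apply] at this
  have hvne : v ≠ 0 := hv.2
  set a : Fin d → ℝ := fun i => (v i).re with ha
  set b : Fin d → ℝ := fun i => (v i).im with hb
  set p : ℝ := a ⬝ᵥ P *ᵥ a + b ⬝ᵥ P *ᵥ b with hpdef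
  set s : ℝ := a ⬝ᵥ S *ᵥ a + b ⬝ᵥ S *ᵥ b with hsdef
  set G : Matrix (Fin d) (Fin d) ℝ := S - (1 - γ) • P with hGdef
  set g : ℝ := a ⬝ᵥ G *ᵥ a + b ⬝ᵥ G *ᵥ b with hgdef
  have hp : 0 < p := riccati_quad_pos hP v hvne
  have hg : 0 < g := riccati_quad_pos hgap v hvne
  have hgs : g = s - (1 - γ) * p := by
    simp only [hgdef, hGdef, Matrix.sub_mulVec, dotProduct_sub, Matrix.smul_mulVec,
      dotProduct_smul, hsdef, hpdef, smul_eq_mul]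
    ring
  -- complexified Lyapunov
  have hlyapC : φ P = (γ : ℂ) • ((φ M)ᵀ * φ P * φ M) + φ S := by
    conv_lhs => rw [hlyap]
    rw [map_add, hφ_smul, _root_.map_mul, _root_.map_mul, hφ_t]
  -- conj-transpose fact
  have hMH : (φ M)ᴴ = (φ M)ᵀ := by
    ext i j
    simp [hφ_apply, Matrix.conjTranspose_apply, Matrix.map_apply, Complex.conj_ofReal]
  have hvec' : φ M *ᵥ v = lam • v := by rw [hφ_apply]; exact hvec
  have hkey : star v ⬝ᵥ ((φ M)ᵀ * φ P * φ M) *ᵥ v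
      = (starRingEnd ℂ) lam * lam * (star v ⬝ᵥ φ P *ᵥ v) := by
    rw [← Matrix.mulVec_mulVec, ← Matrix.mulVec_mulVec]
    rw [Matrix.dotProduct_mulVec, ← hMH, ← Matrix.star_mulVec, hvec']
    rw [star_smul, smul_dotProduct, Matrix.mulVec_smul, dotProduct_smul]
    simp [RCLike.star_def, mul_assoc]
  have hqP : star v ⬝ᵥ φ P *ᵥ v = (p : ℂ) := by
    rw [hφ_apply]; exact riccati_dot_map_eq P hPs v
  have hqS : star v ⬝ᵥ φ S *ᵥ v = (s : ℂ) := by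
    rw [hφ_apply]; exact riccati_dot_map_eq S hSs v
  have hqeq : (p : ℂ) = (γ : ℂ) * ((starRingEnd ℂ) lam * lam) * p + s := by
    conv_lhs => rw [← hqP, hlyapC]
    rw [Matrix.add_mulVec, dotProduct_add, Matrix.smul_mulVec, dotProduct_smul, hkey,
      hqP, hqS, smul_eq_mul]
    ring
  have hconj : (starRingEnd ℂ) lam * lam = ((Complex.normSq lam : ℝ) : ℂ) := by
    rw [mul_comm, Complex.mul_conj]
  rw [hconj] at hqeq
  have hreal : p = γ * Complex.normSq lam * p + s := by
    have := hqeq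
    push_cast at this
    exact_mod_cast this
  have hn : Complex.normSq lam < 1 := by
    have hs : s = g + (1 - γ) * p := by linarith [hgs]
    by_contra hcon
    push_neg at hcon
    have h1 : γ * 1 * p ≤ γ * Complex.normSq lam * p :=
      mul_le_mul_of_nonneg_right (mul_le_mul_of_nonneg_left hcon hγ0.le) hp.le
    linarith
  have : ‖lam‖ ^ 2 < 1 := by
    rw [Complex.sq_norm]
    exact hn
  nlinarith [norm_nonneg lam]


lemma riccati_pow_tendsto {d : ℕ} (M : Matrix (Fin d) (Fin d) ℝ)
    (h : ∀ lam ∈ spectrum ℂ (M.map (algebraMap ℝ ℂ)), ‖lam‖ < 1) :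
    Filter.Tendsto (fun k : ℕ => M ^ k) Filter.atTop (nhds 0) := by
  rcases Nat.eq_zero_or_pos d with hd | hd
  · subst hd
    have : ∀ k : ℕ, M ^ k = 0 := fun k => Subsingleton.elim _ _
    simpa [this] using tendsto_const_nhds
  haveI : Nonempty (Fin d) := ⟨⟨0, hd⟩⟩
  set Mc := M.map (algebraMap ℝ ℂ) with hMc
  letI instN : NormedRing (Matrix (Fin d) (Fin d) ℂ) := Matrix.linftyOpNormedRing
  letI instA : NormedAlgebra ℂ (Matrix (Fin d) (Fin d) ℂ) := Matrix.linftyOpNormedAlgebra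
  haveI : CompleteSpace (Matrix (Fin d) (Fin d) ℂ) := FiniteDimensional.complete ℂ _
  haveI : Nontrivial (Matrix (Fin d) (Fin d) ℂ) := inferInstance
  have hrad : spectralRadius ℂ Mc < 1 := by
    have h1 : ∀ z ∈ spectrum ℂ Mc, ‖z‖₊ < (1 : NNReal) := by
      intro z hz
      have := h z hz
      simpa [← NNReal.coe_lt_coe] using this
    have := spectrum.spectralRadius_lt_of_forall_lt (a := Mc) (r := 1) h1
    simpa using this
  obtain ⟨c, hc1, hc2⟩ := ENNReal.lt_iff_exists_nnreal_btwn.mp hrad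
  have hc2' : (c : ℝ) < 1 := by exact_mod_cast hc2
  have hgel := spectrum.pow_nnnorm_pow_one_div_tendsto_nhds_spectralRadius Mc
  have hev : ∀ᶠ n : ℕ in atTop, (‖Mc ^ n‖₊ : ENNReal) ^ (1/(n:ℝ)) < (c : ENNReal) :=
    hgel.eventually_lt_const hc1
  have hbound : ∀ᶠ n : ℕ in atTop, ‖Mc ^ n‖ ≤ (c : ℝ) ^ n := by
    filter_upwards [hev, Filter.eventually_ge_atTop 1] with n hn hn1
    have hne : (n : ℝ) ≠ 0 := Nat.cast_ne_zero.mpr (by omega)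
    have hxn : (‖Mc ^ n‖₊ : ENNReal) ≤ (c : ENNReal) ^ (n:ℝ) := by
      have h0 : ((‖Mc ^ n‖₊ : ENNReal) ^ (1/(n:ℝ))) ^ (n:ℝ) ≤ (c : ENNReal) ^ (n:ℝ) :=
        ENNReal.rpow_le_rpow hn.le (by positivity)
      rwa [← ENNReal.rpow_mul, one_div, inv_mul_cancel₀ hne, ENNReal.rpow_one] at h0
    have hxn' : ‖Mc ^ n‖₊ ≤ c ^ n := by
      have h2 : (‖Mc ^ n‖₊ : ENNReal) ≤ ((c ^ n : NNReal) : ENNReal) := by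
        simpa [ENNReal.coe_pow, ← ENNReal.rpow_natCast] using hxn
      exact_mod_cast h2
    have := NNReal.coe_le_coe.mpr hxn'
    simpa [NNReal.coe_pow] using this
  have hnorm0 : Tendsto (fun n : ℕ => ‖Mc ^ n‖) atTop (nhds 0) :=
    squeeze_zero' (Filter.Eventually.of_forall fun n => norm_nonneg _) hbound
      (tendsto_pow_atTop_nhds_zero_of_lt_one c.coe_nonneg hc2')
  have hentry : ∀ (X : Matrix (Fin d) (Fin d) ℂ) (i j : Fin d), ‖X i j‖ ≤ ‖X‖ := by
    intro X i j
    have h1 : ‖X i j‖₊ ≤ ∑ j', ‖X i j'‖₊ :=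
      Finset.single_le_sum (f := fun j' => ‖X i j'‖₊) (fun _ _ => zero_le) (Finset.mem_univ j)
    have h2 : (∑ j', ‖X i j'‖₊) ≤ ‖X‖₊ := by
      rw [Matrix.linfty_opNNNorm_def]
      exact Finset.le_sup (f := fun i => ∑ j : Fin d, ‖X i j‖₊) (Finset.mem_univ i)
    exact_mod_cast h1.trans h2
  have hpowmap : ∀ k : ℕ, (M ^ k).map (algebraMap ℝ ℂ) = Mc ^ k := by
    intro k
    rw [hMc]
    exact map_pow ((algebraMap ℝ ℂ).mapMatrix) M k
  have hentryk : ∀ (i j : Fin d) (k : ℕ), (M ^ k) i j = ((Mc ^ k) i j).re := by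
    intro i j k
    rw [← hpowmap k]
    simp [Matrix.map_apply]
  refine tendsto_pi_nhds.mpr fun i => tendsto_pi_nhds.mpr fun j => ?_
  have hzero : (0 : Matrix (Fin d) (Fin d) ℝ) i j = 0 := rfl
  rw [hzero]
  refine squeeze_zero_norm (fun k => ?_) hnorm0
  rw [hentryk i j k, Real.norm_eq_abs]
  exact (Complex.abs_re_le_norm _).trans (hentry _ i j)

end RiccatiAux

/-- Sufficiency core of the paper's Theorem 3: if `𝒫 ≻ 0` solves the discounted algebraic
Riccati equation and `(1 − γ)𝒫 ≺ Q + HᵀRH`, then the closed-loop matrix `A − BH` is Schur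
stable: every complex eigenvalue has modulus `< 1` and `(A − BH)ᵏ → 0`. -/
theorem riccati_stabilizing_feedback
    {d m : ℕ} (A : Matrix (Fin d) (Fin d) ℝ) (B : Matrix (Fin d) (Fin m) ℝ)
    (γ : ℝ) (hγ0 : 0 < γ) (hγ1 : γ < 1)
    (Q P : Matrix (Fin d) (Fin d) ℝ) (R : Matrix (Fin m) (Fin m) ℝ)
    (hQ : Q.PosSemidef) (hR : R.PosDef) (hP : P.PosDef)
    (L : Matrix (Fin m) (Fin d) ℝ) (hL : L = Bᵀ * P * A)
    (Ψ : Matrix (Fin m) (Fin m) ℝ) (hΨ : Ψ = R + γ • (Bᵀ * P * B))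
    (H : Matrix (Fin m) (Fin d) ℝ) (hH : H = γ • (Ψ⁻¹ * L))
    (hric : P = Q + γ • (Aᵀ * P * A) - (γ ^ 2) • (Lᵀ * Ψ⁻¹ * L))
    (hgap : (Q + Hᵀ * R * H - (1 - γ) • P).PosDef) :
    (∀ lam ∈ spectrum ℂ ((A - B * H).map (algebraMap ℝ ℂ)), ‖lam‖ < 1) ∧
      Filter.Tendsto (fun k : ℕ => (A - B * H) ^ k) Filter.atTop (nhds 0) := by
  have hPs : Pᵀ = P := hP.isHermitian
  have hQs : Qᵀ = Q := hQ.isHermitian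
  have hRs : Rᵀ = R := hR.isHermitian
  have hSs : (Q + Hᵀ * R * H)ᵀ = Q + Hᵀ * R * H := by
    rw [Matrix.transpose_add, hQs, Matrix.transpose_mul, Matrix.transpose_mul,
      Matrix.transpose_transpose, hRs, Matrix.mul_assoc]
  have hlyap : P = γ • ((A - B * H)ᵀ * P * (A - B * H)) + (Q + Hᵀ * R * H) :=
    riccati_lyap A B γ hγ0 Q P R hR hP L hL Ψ hΨ H hH hric
  have hev : ∀ lam ∈ spectrum ℂ ((A - B * H).map (algebraMap ℝ ℂ)), ‖lam‖ < 1 :=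
    riccati_eig (A - B * H) P (Q + Hᵀ * R * H) γ hγ0 hγ1 hP hPs hSs hlyap hgap
  exact ⟨hev, riccati_pow_tendsto (A - B * H) hev⟩
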